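/- arXiv:1402.7243 — 2 statements merged into one kernel-verified Lean document; each statement's English description precedes it below -/
import Mathlib

section
/- Let R, S, ψ be a numerical solution of the semi-discrete energy-dissipative DG scheme for the Riemann-invariant (RS) formulation with periodic boundary conditions; that is, for every t ∈ [0,T] and all test functions φ, η, ζ ∈ X^p_Δx(Ω), equations (i)–(iii) hold, where (i) is the conservative R-equation modified by replacing the interface flux c̄_{j±1/2}·R̄_{j±1/2} on the left-hand side by the diffusive flux c̄_{j±1/2}·R̄_{j±1/2} + (1/2)s_{j±1/2}·⟦R⟧_{j±1/2} and subtracting the shock-capturing term Σ_{j=1}^N ε_j ∫_{Ω_j} ∂_xR·∂_xφ dx from the right-hand side; (ii) is the conservative S-equation modified by replacing the interface flux c̄_{j±1/2}·S̄_{j±1/2} on the left-hand side by c̄_{j±1/2}·S̄_{j±1/2} − (1/2)s_{j±1/2}·⟦S⟧_{j±1/2} and subtracting Σ_{j=1}^N ε_j ∫_{Ω_j} ∂_xS·∂_xη dx from the right-hand side; and (iii) is Σ_{j=1}^N ∫_{Ω_j} ∂_tψ·ζ dx = Σ_{j=1}^N ∫_{Ω_j} ((R+S)/2)·ζ dx.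 Here s_{j+1/2}(t) = max{ c(ψ⁻_{j+1/2}(t)), c(ψ⁺_{j+1/2}(t)) } ≥ 0 and ε_j(t) ≥ 0 are the nonnegative shock-capturing coefficients. Then the discrete energy t ↦ Σ_{j=1}^N ∫_{Ω_j} (R(t,x)² + S(t,x)²)/2 dx is non-increasing: its time derivative satisfies d/dt Σ_{j=1}^N ∫_{Ω_j} (R² + S²)/2 dx = −(1/2) Σ_{j=1}^N s_{j+1/2}( ⟦R⟧²_{j+1/2} + ⟦S⟧²_{j+1/2} ) − Σ_{j=1}^N ε_j ∫_{Ω_j} ((∂_xR)² + (∂_xS)²) dx ≤ 0 for every t ∈ [0,T]. -/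
open Finset

noncomputable section

open intervalIntegral MeasureTheory in
lemma hasDerivAt_intervalIntegral_param (G : ℝ × ℝ → ℝ) (hG : ContDiff ℝ 1 G) (a b t : ℝ) :
    HasDerivAt (fun s => ∫ y in a..b, G (s, y))
      (∫ y in a..b, deriv (fun s => G (s, y)) t) t := by
  set Gt : ℝ × ℝ → ℝ := fun q => fderiv ℝ G q (1, 0) with hGt
  have hGtc : Continuous Gt := (hG.continuous_fderiv one_ne_zero).clm_apply continuous_const
  have hder : ∀ (s y : ℝ), HasDerivAt (fun s => G (s, y)) (Gt (s, y)) s := by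
    intro s y
    have h1 : HasDerivAt (fun s : ℝ => (s, y)) ((1 : ℝ), (0 : ℝ)) s :=
      (hasDerivAt_id s).prodMk (hasDerivAt_const s y)
    exact ((hG.differentiable one_ne_zero (s, y)).hasFDerivAt).comp_hasDerivAt s h1
  have hK : IsCompact ((Set.Icc (t - 1) (t + 1)) ×ˢ (Set.uIcc a b)) :=
    isCompact_Icc.prod isCompact_uIcc
  obtain ⟨C, hC⟩ := hK.exists_bound_of_continuousOn hGtc.continuousOn
  have key := intervalIntegral.hasDerivAt_integral_of_dominated_loc_of_deriv_le
    (F := fun s y => G (s, y)) (F' := fun s y => Gt (s, y)) (x₀ := t) (a := a) (b := b)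
    (μ := volume) (bound := fun _ => C) (s := Metric.ball t 1) (Metric.ball_mem_nhds t one_pos)
    (Filter.Eventually.of_forall fun s =>
      (hG.continuous.comp (continuous_const.prodMk continuous_id)).aestronglyMeasurable)
    ((hG.continuous.comp (continuous_const.prodMk continuous_id)).intervalIntegrable a b)
    ((hGtc.comp (continuous_const.prodMk continuous_id)).aestronglyMeasurable)
    (Filter.Eventually.of_forall fun y hy s hs => by
      have : (s, y) ∈ (Set.Icc (t - 1) (t + 1)) ×ˢ (Set.uIcc a b) := by
        constructor
        · simp only [Metric.mem_ball, Real.dist_eq] at hs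
          constructor <;> [linarith [abs_lt.mp hs]; linarith [abs_lt.mp hs]]
        · exact Set.uIoc_subset_uIcc hy
      exact hC _ this)
    (intervalIntegrable_const)
    (Filter.Eventually.of_forall fun y hy s hs => hder s y)
  have := key.2
  refine this.congr_deriv ?_
  refine intervalIntegral.integral_congr fun y hy => ?_
  exact ((hder t y).deriv).symm


/-- The wave speed `c(u) = √(α cos²u + β sin²u)`. -/
def waveC (α β u : ℝ) : ℝ :=
  Real.sqrt (α * Real.cos u ^ 2 + β * Real.sin u ^ 2)

/-- Left endpoint `x_{j-1/2}` of cell `Ω_j`. -/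
def cellL {N : ℕ} (x : Fin (N + 1) → ℝ) (j : Fin N) : ℝ := x j.castSucc

/-- Right endpoint `x_{j+1/2}` of cell `Ω_j`. -/
def cellR {N : ℕ} (x : Fin (N + 1) → ℝ) (j : Fin N) : ℝ := x j.succ

/-- Minus (left) trace `u⁻_{j+1/2}` of the grid function `u` at the interface
to the right of cell `j`, at time `t`. -/
def trM {N : ℕ} (x : Fin (N + 1) → ℝ) (u : Fin N → ℝ → ℝ → ℝ) (t : ℝ) (j : Fin N) : ℝ :=
  u j t (cellR x j)

/-- Plus (right) trace `u⁺_{j+1/2}` at the interface to the right of cell `j`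
(cell indices are periodic: the cell to the right of cell `j` is `j + 1` in `Fin N`). -/
def trP {N : ℕ} [NeZero N] (x : Fin (N + 1) → ℝ) (u : Fin N → ℝ → ℝ → ℝ) (t : ℝ) (j : Fin N) : ℝ :=
  u (j + 1) t (cellL x (j + 1))

/-- Interface average `ū_{j+1/2} = (u⁺ + u⁻)/2`. -/
def avgI {N : ℕ} [NeZero N] (x : Fin (N + 1) → ℝ) (u : Fin N → ℝ → ℝ → ℝ) (t : ℝ) (j : Fin N) : ℝ :=
  (trP x u t j + trM x u t j) / 2

/-- Interface jump `⟦u⟧_{j+1/2} = u⁺ − u⁻`. -/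
def jmpI {N : ℕ} [NeZero N] (x : Fin (N + 1) → ℝ) (u : Fin N → ℝ → ℝ → ℝ) (t : ℝ) (j : Fin N) : ℝ :=
  trP x u t j - trM x u t j

/-- Averaged interface wave speed `c̄_{j+1/2} = (c(ψ⁺) + c(ψ⁻))/2`. -/
def cbarI {N : ℕ} [NeZero N] (α β : ℝ) (x : Fin (N + 1) → ℝ)
    (ψ : Fin N → ℝ → ℝ → ℝ) (t : ℝ) (j : Fin N) : ℝ :=
  (waveC α β (trP x ψ t j) + waveC α β (trM x ψ t j)) / 2

/-- Maximal local wave velocity `s_{j+1/2} = max{c(ψ⁻), c(ψ⁺)}`. -/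
def sMaxI {N : ℕ} [NeZero N] (α β : ℝ) (x : Fin (N + 1) → ℝ)
    (ψ : Fin N → ℝ → ℝ → ℝ) (t : ℝ) (j : Fin N) : ℝ :=
  max (waveC α β (trM x ψ t j)) (waveC α β (trP x ψ t j))

/-- `f : ℝ → ℝ` is (the cell restriction of) a polynomial of degree `≤ p`,
i.e. the cell belongs to the space `X^p_Δx`. -/
def IsPolyDeg (p : ℕ) (f : ℝ → ℝ) : Prop :=
  ∃ q : Polynomial ℝ, q.natDegree ≤ p ∧ ∀ y : ℝ, f y = q.eval y

/-- energy stability for the semi-discrete energy-dissipative DG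
scheme based on the Riemann-invariant (`R,S`) formulation, with periodic
boundary conditions: the discrete energy `t ↦ Σ_j ∫_{Ω_j} (R² + S²)/2 dx`
has derivative
`−(1/2) Σ_j s_{j+1/2}(⟦R⟧² + ⟦S⟧²) − Σ_j ε_j ∫_{Ω_j} (R_x² + S_x²) dx ≤ 0`. -/
theorem dg_RS_dissipative_energy
    (N p : ℕ) [NeZero N] (T α β : ℝ) (hT : 0 < T) (hα : 0 < α) (hβ : 0 < β)
    (x : Fin (N + 1) → ℝ) (hx : StrictMono x)
    (R S ψ : Fin N → ℝ → ℝ → ℝ)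
    (ε : Fin N → ℝ → ℝ) (hε : ∀ j, ∀ t ∈ Set.Icc (0 : ℝ) T, 0 ≤ ε j t)
    (hRreg : ∀ j, ContDiff ℝ 1 (Function.uncurry (R j)))
    (hSreg : ∀ j, ContDiff ℝ 1 (Function.uncurry (S j)))
    (hψreg : ∀ j, ContDiff ℝ 1 (Function.uncurry (ψ j)))
    (hRpoly : ∀ j t, IsPolyDeg p (R j t))
    (hSpoly : ∀ j t, IsPolyDeg p (S j t))
    (hψpoly : ∀ j t, IsPolyDeg p (ψ j t))
    -- scheme equation (i) (the `R`-equation with diffusive flux and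
    -- shock-capturing term), for all test functions `φ ∈ X^p_Δx`
    (hscheme1 : ∀ φ : Fin N → Polynomial ℝ, (∀ j, (φ j).natDegree ≤ p) →
      ∀ t ∈ Set.Icc (0 : ℝ) T,
        (∑ j : Fin N, ∫ y in cellL x j..cellR x j,
            deriv (fun s => R j s y) t * (φ j).eval y)
        + (∑ j : Fin N, ∫ y in cellL x j..cellR x j,
            waveC α β (ψ j t y) * R j t y * deriv (fun z => (φ j).eval z) y)
        - (∑ j : Fin N,
            (cbarI α β x ψ t j * avgI x R t j
              + (1 / 2) * sMaxI α β x ψ t j * jmpI x R t j)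
            * (φ j).eval (cellR x j))
        + (∑ j : Fin N,
            (cbarI α β x ψ t (j - 1) * avgI x R t (j - 1)
              + (1 / 2) * sMaxI α β x ψ t (j - 1) * jmpI x R t (j - 1))
            * (φ j).eval (cellL x j))
        =
        (1 / 2) * (∑ j : Fin N, ∫ y in cellL x j..cellR x j,
            waveC α β (ψ j t y) * deriv (fun z => R j t z * (φ j).eval z) y)
        - (1 / 2) * (∑ j : Fin N,
            cbarI α β x ψ t j * trM x R t j * (φ j).eval (cellR x j))
        + (1 / 2) * (∑ j : Fin N,
            cbarI α β x ψ t (j - 1) * trP x R t (j - 1) * (φ j).eval (cellL x j))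
        - (1 / 2) * (∑ j : Fin N, ∫ y in cellL x j..cellR x j,
            waveC α β (ψ j t y) * deriv (fun z => S j t z * (φ j).eval z) y)
        + (1 / 2) * (∑ j : Fin N,
            cbarI α β x ψ t j * trM x S t j * (φ j).eval (cellR x j))
        - (1 / 2) * (∑ j : Fin N,
            cbarI α β x ψ t (j - 1) * trP x S t (j - 1) * (φ j).eval (cellL x j))
        - (∑ j : Fin N, ε j t * ∫ y in cellL x j..cellR x j,
            deriv (fun z => R j t z) y * deriv (fun z => (φ j).eval z) y))
    -- scheme equation (ii) (the `S`-equation with diffusive flux and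
    -- shock-capturing term), for all test functions `η ∈ X^p_Δx`
    (hscheme2 : ∀ η : Fin N → Polynomial ℝ, (∀ j, (η j).natDegree ≤ p) →
      ∀ t ∈ Set.Icc (0 : ℝ) T,
        (∑ j : Fin N, ∫ y in cellL x j..cellR x j,
            deriv (fun s => S j s y) t * (η j).eval y)
        - (∑ j : Fin N, ∫ y in cellL x j..cellR x j,
            waveC α β (ψ j t y) * S j t y * deriv (fun z => (η j).eval z) y)
        + (∑ j : Fin N,
            (cbarI α β x ψ t j * avgI x S t j
              - (1 / 2) * sMaxI α β x ψ t j * jmpI x S t j)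
            * (η j).eval (cellR x j))
        - (∑ j : Fin N,
            (cbarI α β x ψ t (j - 1) * avgI x S t (j - 1)
              - (1 / 2) * sMaxI α β x ψ t (j - 1) * jmpI x S t (j - 1))
            * (η j).eval (cellL x j))
        =
        (1 / 2) * (∑ j : Fin N, ∫ y in cellL x j..cellR x j,
            waveC α β (ψ j t y) * deriv (fun z => R j t z * (η j).eval z) y)
        - (1 / 2) * (∑ j : Fin N,
            cbarI α β x ψ t j * trM x R t j * (η j).eval (cellR x j))
        + (1 / 2) * (∑ j : Fin N,
            cbarI α β x ψ t (j - 1) * trP x R t (j - 1) * (η j).eval (cellL x j))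
        - (1 / 2) * (∑ j : Fin N, ∫ y in cellL x j..cellR x j,
            waveC α β (ψ j t y) * deriv (fun z => S j t z * (η j).eval z) y)
        + (1 / 2) * (∑ j : Fin N,
            cbarI α β x ψ t j * trM x S t j * (η j).eval (cellR x j))
        - (1 / 2) * (∑ j : Fin N,
            cbarI α β x ψ t (j - 1) * trP x S t (j - 1) * (η j).eval (cellL x j))
        - (∑ j : Fin N, ε j t * ∫ y in cellL x j..cellR x j,
            deriv (fun z => S j t z) y * deriv (fun z => (η j).eval z) y))
    -- scheme equation (iii) (the `ψ`-equation), for all test functions `ζ ∈ X^p_Δx`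
    (hscheme3 : ∀ ζ : Fin N → Polynomial ℝ, (∀ j, (ζ j).natDegree ≤ p) →
      ∀ t ∈ Set.Icc (0 : ℝ) T,
        (∑ j : Fin N, ∫ y in cellL x j..cellR x j,
            deriv (fun s => ψ j s y) t * (ζ j).eval y)
        = ∑ j : Fin N, ∫ y in cellL x j..cellR x j,
            (R j t y + S j t y) / 2 * (ζ j).eval y) :
    ∀ t ∈ Set.Icc (0 : ℝ) T,
      HasDerivAt
        (fun s => ∑ j : Fin N, ∫ y in cellL x j..cellR x j,
          (R j s y ^ 2 + S j s y ^ 2) / 2)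
        (-(1 / 2) * (∑ j : Fin N,
            sMaxI α β x ψ t j * (jmpI x R t j ^ 2 + jmpI x S t j ^ 2))
          - ∑ j : Fin N, ε j t * ∫ y in cellL x j..cellR x j,
              ((deriv (fun z => R j t z) y) ^ 2 + (deriv (fun z => S j t z) y) ^ 2))
        t
      ∧ -(1 / 2) * (∑ j : Fin N,
            sMaxI α β x ψ t j * (jmpI x R t j ^ 2 + jmpI x S t j ^ 2))
          - (∑ j : Fin N, ε j t * ∫ y in cellL x j..cellR x j,
              ((deriv (fun z => R j t z) y) ^ 2 + (deriv (fun z => S j t z) y) ^ 2))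
        ≤ 0 := by
  intro t ht
  -- nonnegativity facts
  have hab : ∀ j : Fin N, cellL x j ≤ cellR x j := fun j =>
    (hx (Fin.castSucc_lt_succ (i := j))).le
  have hsnn : ∀ j : Fin N, 0 ≤ sMaxI α β x ψ t j := fun j =>
    le_trans (Real.sqrt_nonneg _) (le_max_left _ _)
  -- choose polynomial representatives at time t
  choose qR hqRdeg hqRval using fun j => hRpoly j t
  choose qS hqSdeg hqSval using fun j => hSpoly j t
  have hvalR : ∀ (j : Fin N) (y : ℝ), (qR j).eval y = R j t y := fun j y => (hqRval j y).symm
  have hvalS : ∀ (j : Fin N) (y : ℝ), (qS j).eval y = S j t y := fun j y => (hqSval j y).symm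
  have hfR : ∀ j, (fun z => R j t z) = fun z => (qR j).eval z := fun j => funext (hqRval j)
  have hfS : ∀ j, (fun z => S j t z) = fun z => (qS j).eval z := fun j => funext (hqSval j)
  have hRd : ∀ j, Differentiable ℝ (fun z => R j t z) := by
    intro j; rw [hfR j]; exact (qR j).differentiable
  have hSd : ∀ j, Differentiable ℝ (fun z => S j t z) := by
    intro j; rw [hfS j]; exact (qS j).differentiable
  have hRxcont : ∀ j, Continuous (fun y => deriv (fun z => R j t z) y) := by
    intro j; rw [hfR j]
    simp only [Polynomial.deriv]
    exact (qR j).derivative.continuous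
  have hSxcont : ∀ j, Continuous (fun y => deriv (fun z => S j t z) y) := by
    intro j; rw [hfS j]
    simp only [Polynomial.deriv]
    exact (qS j).derivative.continuous
  have hRcont : ∀ j, Continuous (fun y => R j t y) := by
    intro j; rw [hfR j]; exact (qR j).continuous
  have hScont : ∀ j, Continuous (fun y => S j t y) := by
    intro j; rw [hfS j]; exact (qS j).continuous
  -- time derivative facts
  have hGreg : ∀ j : Fin N, ContDiff ℝ 1
      (fun q : ℝ × ℝ => (R j q.1 q.2 ^ 2 + S j q.1 q.2 ^ 2) / 2) := by
    intro j
    exact (((hRreg j).pow 2).add ((hSreg j).pow 2)).div_const 2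
  have hEj : ∀ j : Fin N,
      HasDerivAt (fun s => ∫ y in cellL x j..cellR x j, (R j s y ^ 2 + S j s y ^ 2) / 2)
        (∫ y in cellL x j..cellR x j, deriv (fun s => (R j s y ^ 2 + S j s y ^ 2) / 2) t) t := by
    intro j
    exact hasDerivAt_intervalIntegral_param _ (hGreg j) (cellL x j) (cellR x j) t
  have hE : HasDerivAt (fun s => ∑ j : Fin N, ∫ y in cellL x j..cellR x j,
        (R j s y ^ 2 + S j s y ^ 2) / 2)
      (∑ j : Fin N, ∫ y in cellL x j..cellR x j,
        deriv (fun s => (R j s y ^ 2 + S j s y ^ 2) / 2) t) t :=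
    HasDerivAt.fun_sum fun j _ => hEj j
  -- partial t derivatives: HasDerivAt and continuity in y
  have hRt : ∀ (j : Fin N) (y : ℝ),
      HasDerivAt (fun s => R j s y) (deriv (fun s => R j s y) t) t := by
    intro j y
    have : Differentiable ℝ (fun s : ℝ => Function.uncurry (R j) (s, y)) :=
      ((hRreg j).differentiable one_ne_zero).comp (differentiable_id.prodMk (differentiable_const y))
    exact (this t).hasDerivAt
  have hSt : ∀ (j : Fin N) (y : ℝ),
      HasDerivAt (fun s => S j s y) (deriv (fun s => S j s y) t) t := by
    intro j y
    have : Differentiable ℝ (fun s : ℝ => Function.uncurry (S j) (s, y)) :=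
      ((hSreg j).differentiable one_ne_zero).comp (differentiable_id.prodMk (differentiable_const y))
    exact (this t).hasDerivAt
  have hRtcont : ∀ j : Fin N, Continuous (fun y => deriv (fun s => R j s y) t) := by
    intro j
    have hform : ∀ y : ℝ, deriv (fun s => R j s y) t
        = fderiv ℝ (Function.uncurry (R j)) (t, y) (1, 0) := by
      intro y
      have h1 : HasDerivAt (fun s : ℝ => (s, y)) ((1 : ℝ), (0 : ℝ)) t :=
        (hasDerivAt_id t).prodMk (hasDerivAt_const t y)
      have h2 := (((hRreg j).differentiable one_ne_zero (t, y)).hasFDerivAt).comp_hasDerivAt t h1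
      exact h2.deriv
    rw [funext hform]
    exact (((hRreg j).continuous_fderiv one_ne_zero).clm_apply continuous_const).comp
      (continuous_const.prodMk continuous_id)
  have hStcont : ∀ j : Fin N, Continuous (fun y => deriv (fun s => S j s y) t) := by
    intro j
    have hform : ∀ y : ℝ, deriv (fun s => S j s y) t
        = fderiv ℝ (Function.uncurry (S j)) (t, y) (1, 0) := by
      intro y
      have h1 : HasDerivAt (fun s : ℝ => (s, y)) ((1 : ℝ), (0 : ℝ)) t :=
        (hasDerivAt_id t).prodMk (hasDerivAt_const t y)
      have h2 := (((hSreg j).differentiable one_ne_zero (t, y)).hasFDerivAt).comp_hasDerivAt t h1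
      exact h2.deriv
    rw [funext hform]
    exact (((hSreg j).continuous_fderiv one_ne_zero).clm_apply continuous_const).comp
      (continuous_const.prodMk continuous_id)
  -- pointwise value of time derivative of energy density
  have hdval : ∀ (j : Fin N) (y : ℝ),
      deriv (fun s => (R j s y ^ 2 + S j s y ^ 2) / 2) t
        = deriv (fun s => R j s y) t * R j t y + deriv (fun s => S j s y) t * S j t y := by
    intro j y
    have h := (((hRt j y).pow 2).add ((hSt j y).pow 2)).div_const 2
    rw [show (fun s => (R j s y ^ 2 + S j s y ^ 2) / 2) = (fun x => ((fun s => R j s y) ^ 2 + (fun s => S j s y) ^ 2) x / 2) from rfl, h.deriv]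
    push_cast
    ring
  -- sum of derivatives splits
  have hDsum : (∑ j : Fin N, ∫ y in cellL x j..cellR x j,
        deriv (fun s => (R j s y ^ 2 + S j s y ^ 2) / 2) t)
      = (∑ j : Fin N, ∫ y in cellL x j..cellR x j, deriv (fun s => R j s y) t * R j t y)
        + (∑ j : Fin N, ∫ y in cellL x j..cellR x j, deriv (fun s => S j s y) t * S j t y) := by
    rw [← Finset.sum_add_distrib]
    refine Finset.sum_congr rfl fun j _ => ?_
    rw [← intervalIntegral.integral_add
      (((hRtcont j).fun_mul (hRcont j)).intervalIntegrable _ _)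
      (((hStcont j).fun_mul (hScont j)).intervalIntegrable _ _)]
    exact intervalIntegral.integral_congr fun y _ => hdval j y
  -- the epsilon terms split
  have hE1 : (∑ j : Fin N, ε j t * ∫ y in cellL x j..cellR x j,
        ((deriv (fun z => R j t z) y) ^ 2 + (deriv (fun z => S j t z) y) ^ 2))
      = (∑ j : Fin N, ε j t * ∫ y in cellL x j..cellR x j,
            deriv (fun z => R j t z) y * deriv (fun z => R j t z) y)
        + (∑ j : Fin N, ε j t * ∫ y in cellL x j..cellR x j,
            deriv (fun z => S j t z) y * deriv (fun z => S j t z) y) := by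
    rw [← Finset.sum_add_distrib]
    refine Finset.sum_congr rfl fun j _ => ?_
    rw [← mul_add]
    congr 1
    rw [← intervalIntegral.integral_add
      (((hRxcont j).fun_mul (hRxcont j)).intervalIntegrable _ _)
      (((hSxcont j).fun_mul (hSxcont j)).intervalIntegrable _ _)]
    exact intervalIntegral.integral_congr fun y _ => by ring
  -- scheme equations with test functions qR, qS
  have eq1 := hscheme1 qR hqRdeg t ht
  have eq2 := hscheme2 qS hqSdeg t ht
  simp only [hvalR] at eq1
  simp only [hvalS] at eq2
  -- endpoint values as traces
  have hcellR_R : ∀ j : Fin N, R j t (cellR x j) = trM x R t j := fun j => rfl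
  have hcellR_S : ∀ j : Fin N, S j t (cellR x j) = trM x S t j := fun j => rfl
  have hcellL_R : ∀ j : Fin N, R j t (cellL x j) = trP x R t (j - 1) := by
    intro j; simp [trP, sub_add_cancel]
  have hcellL_S : ∀ j : Fin N, S j t (cellL x j) = trP x S t (j - 1) := by
    intro j; simp [trP, sub_add_cancel]
  simp only [hcellR_R, hcellL_R] at eq1
  simp only [hcellR_S, hcellL_S] at eq2
  -- the quadratic derivative integrals
  have hB1R : ∀ j : Fin N, (∫ y in cellL x j..cellR x j,
        waveC α β (ψ j t y) * deriv (fun z => R j t z * R j t z) y)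
      = 2 * ∫ y in cellL x j..cellR x j,
        waveC α β (ψ j t y) * R j t y * deriv (fun z => R j t z) y := by
    intro j
    rw [← intervalIntegral.integral_const_mul]
    refine intervalIntegral.integral_congr fun y _ => ?_
    rw [deriv_fun_mul (hRd j y) (hRd j y)]
    ring
  have hB1S : ∀ j : Fin N, (∫ y in cellL x j..cellR x j,
        waveC α β (ψ j t y) * deriv (fun z => S j t z * S j t z) y)
      = 2 * ∫ y in cellL x j..cellR x j,
        waveC α β (ψ j t y) * S j t y * deriv (fun z => S j t z) y := by
    intro j
    rw [← intervalIntegral.integral_const_mul]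
    refine intervalIntegral.integral_congr fun y _ => ?_
    rw [deriv_fun_mul (hSd j y) (hSd j y)]
    ring
  have hcrossRS : ∀ j : Fin N, (∫ y in cellL x j..cellR x j,
        waveC α β (ψ j t y) * deriv (fun z => R j t z * S j t z) y)
      = ∫ y in cellL x j..cellR x j,
        waveC α β (ψ j t y) * deriv (fun z => S j t z * R j t z) y := by
    intro j
    rw [show (fun z => R j t z * S j t z) = fun z => S j t z * R j t z from
      funext fun z => mul_comm _ _]
  simp only [hB1R, ← Finset.mul_sum] at eq1
  simp only [hB1S, hcrossRS, ← Finset.mul_sum] at eq2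
  -- reindexing lemmas
  have hre1 : (∑ j : Fin N,
        (cbarI α β x ψ t (j - 1) * avgI x R t (j - 1)
          + 1 / 2 * sMaxI α β x ψ t (j - 1) * jmpI x R t (j - 1)) * trP x R t (j - 1))
      = ∑ j : Fin N,
        (cbarI α β x ψ t j * avgI x R t j
          + 1 / 2 * sMaxI α β x ψ t j * jmpI x R t j) * trP x R t j :=
    Fintype.sum_equiv (Equiv.subRight 1) _ _ (fun j => rfl)
  have hre2 : (∑ j : Fin N,
        cbarI α β x ψ t (j - 1) * trP x R t (j - 1) * trP x R t (j - 1))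
      = ∑ j : Fin N, cbarI α β x ψ t j * trP x R t j * trP x R t j :=
    Fintype.sum_equiv (Equiv.subRight 1) _ _ (fun j => rfl)
  have hre3 : (∑ j : Fin N,
        cbarI α β x ψ t (j - 1) * trP x S t (j - 1) * trP x R t (j - 1))
      = ∑ j : Fin N, cbarI α β x ψ t j * trP x S t j * trP x R t j :=
    Fintype.sum_equiv (Equiv.subRight 1) _ _ (fun j => rfl)
  have hre4 : (∑ j : Fin N,
        (cbarI α β x ψ t (j - 1) * avgI x S t (j - 1)
          - 1 / 2 * sMaxI α β x ψ t (j - 1) * jmpI x S t (j - 1)) * trP x S t (j - 1))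
      = ∑ j : Fin N,
        (cbarI α β x ψ t j * avgI x S t j
          - 1 / 2 * sMaxI α β x ψ t j * jmpI x S t j) * trP x S t j :=
    Fintype.sum_equiv (Equiv.subRight 1) _ _ (fun j => rfl)
  have hre5 : (∑ j : Fin N,
        cbarI α β x ψ t (j - 1) * trP x R t (j - 1) * trP x S t (j - 1))
      = ∑ j : Fin N, cbarI α β x ψ t j * trP x R t j * trP x S t j :=
    Fintype.sum_equiv (Equiv.subRight 1) _ _ (fun j => rfl)
  have hre6 : (∑ j : Fin N,
        cbarI α β x ψ t (j - 1) * trP x S t (j - 1) * trP x S t (j - 1))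
      = ∑ j : Fin N, cbarI α β x ψ t j * trP x S t j * trP x S t j :=
    Fintype.sum_equiv (Equiv.subRight 1) _ _ (fun j => rfl)
  -- the key interface identity
  have hkey :
      (∑ j : Fin N, (cbarI α β x ψ t j * avgI x R t j
          + 1 / 2 * sMaxI α β x ψ t j * jmpI x R t j) * trM x R t j)
      - (∑ j : Fin N, (cbarI α β x ψ t j * avgI x R t j
          + 1 / 2 * sMaxI α β x ψ t j * jmpI x R t j) * trP x R t j)
      - (1 / 2) * (∑ j : Fin N, cbarI α β x ψ t j * trM x R t j * trM x R t j)
      + (1 / 2) * (∑ j : Fin N, cbarI α β x ψ t j * trP x R t j * trP x R t j)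
      + (1 / 2) * (∑ j : Fin N, cbarI α β x ψ t j * trM x S t j * trM x R t j)
      - (1 / 2) * (∑ j : Fin N, cbarI α β x ψ t j * trP x S t j * trP x R t j)
      - (∑ j : Fin N, (cbarI α β x ψ t j * avgI x S t j
          - 1 / 2 * sMaxI α β x ψ t j * jmpI x S t j) * trM x S t j)
      + (∑ j : Fin N, (cbarI α β x ψ t j * avgI x S t j
          - 1 / 2 * sMaxI α β x ψ t j * jmpI x S t j) * trP x S t j)
      - (1 / 2) * (∑ j : Fin N, cbarI α β x ψ t j * trM x R t j * trM x S t j)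
      + (1 / 2) * (∑ j : Fin N, cbarI α β x ψ t j * trP x R t j * trP x S t j)
      + (1 / 2) * (∑ j : Fin N, cbarI α β x ψ t j * trM x S t j * trM x S t j)
      - (1 / 2) * (∑ j : Fin N, cbarI α β x ψ t j * trP x S t j * trP x S t j)
      = -(1 / 2) * (∑ j : Fin N,
          sMaxI α β x ψ t j * (jmpI x R t j ^ 2 + jmpI x S t j ^ 2)) := by
    simp only [Finset.mul_sum, ← Finset.sum_sub_distrib, ← Finset.sum_add_distrib]
    refine Finset.sum_congr rfl fun j _ => ?_
    simp only [avgI, jmpI]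
    ring
  refine ⟨?_, ?_⟩
  · have hval : (∑ j : Fin N, ∫ y in cellL x j..cellR x j,
        deriv (fun s => (R j s y ^ 2 + S j s y ^ 2) / 2) t)
      = -(1 / 2) * (∑ j : Fin N,
            sMaxI α β x ψ t j * (jmpI x R t j ^ 2 + jmpI x S t j ^ 2))
          - ∑ j : Fin N, ε j t * ∫ y in cellL x j..cellR x j,
              ((deriv (fun z => R j t z) y) ^ 2 + (deriv (fun z => S j t z) y) ^ 2) := by
      rw [hDsum, hE1]
      linarith [eq1, eq2, hre1, hre2, hre3, hre4, hre5, hre6, hkey]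
    rw [← hval]
    exact hE
  · have h1 : 0 ≤ ∑ j : Fin N,
        sMaxI α β x ψ t j * (jmpI x R t j ^ 2 + jmpI x S t j ^ 2) :=
      Finset.sum_nonneg fun j _ =>
        mul_nonneg (hsnn j) (add_nonneg (sq_nonneg _) (sq_nonneg _))
    have h2 : 0 ≤ ∑ j : Fin N, ε j t * ∫ y in cellL x j..cellR x j,
        ((deriv (fun z => R j t z) y) ^ 2 + (deriv (fun z => S j t z) y) ^ 2) :=
      Finset.sum_nonneg fun j _ =>
        mul_nonneg (hε j t ht)
          (intervalIntegral.integral_nonneg (hab j) fun y _ => by positivity)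
    linarith


end
end

section
/- Let v, w, ψ be a numerical solution of the semi-discrete energy-dissipative DG scheme for the (v,w) formulation with periodic boundary conditions; that is, for every t ∈ [0,T] and all test functions φ, η, ζ ∈ X^p_Δx(Ω): (i) Σ_{j=1}^N [ ∫_{Ω_j} ∂_tv·φ dx + ∫_{Ω_j} c(ψ)·w·∂_xφ dx − ( c̄_{j+1/2}·w̄_{j+1/2} + (1/2)s_{j+1/2}·⟦v⟧_{j+1/2} )·φ⁻_{j+1/2} + ( c̄_{j−1/2}·w̄_{j−1/2} + (1/2)s_{j−1/2}·⟦v⟧_{j−1/2} )·φ⁺_{j−1/2} ] = Σ_{j=1}^N [ ∫_{Ω_j} c(ψ)·∂_x(wφ) dx − c̄_{j+1/2}·w⁻_{j+1/2}·φ⁻_{j+1/2} + c̄_{j−1/2}·w⁺_{j−1/2}·φ⁺_{j−1/2} − ε_j ∫_{Ω_j} ∂_xv·∂_xφ dx ]; (ii) Σ_{j=1}^N [ ∫_{Ω_j} ∂_tw·η dx + ∫_{Ω_j} c(ψ)·v·∂_xη dx − ( c̄_{j+1/2}·v̄_{j+1/2} + (1/2)s_{j+1/2}·⟦w⟧_{j+1/2}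 )·η⁻_{j+1/2} + ( c̄_{j−1/2}·v̄_{j−1/2} + (1/2)s_{j−1/2}·⟦w⟧_{j−1/2} )·η⁺_{j−1/2} ] = − Σ_{j=1}^N ε_j ∫_{Ω_j} ∂_xw·∂_xη dx; (iii) Σ_{j=1}^N ∫_{Ω_j} ∂_tψ·ζ dx = Σ_{j=1}^N ∫_{Ω_j} v·ζ dx; where s_{j+1/2}(t) = max{ c(ψ⁻_{j+1/2}(t)), c(ψ⁺_{j+1/2}(t)) } ≥ 0 and ε_j(t) ≥ 0. Then the discrete energy t ↦ Σ_{j=1}^N ∫_{Ω_j} ( v(t,x)² + w(t,x)² )/2 dx is non-increasing: its time derivative equals −(1/2) Σ_{j=1}^N s_{j+1/2}( ⟦v⟧²_{j+1/2} + ⟦w⟧²_{j+1/2} ) − Σ_{j=1}^N ε_j ∫_{Ω_j} ((∂_xv)² + (∂_xw)²) dx ≤ 0 for every t ∈ [0,T]. -/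
open Finset

noncomputable section

open MeasureTheory in
lemma partial_hasDerivAt {F : ℝ → ℝ → ℝ} (hF : ContDiff ℝ 1 (Function.uncurry F))
    (s y : ℝ) :
    HasDerivAt (fun s' => F s' y) (fderiv ℝ (Function.uncurry F) (s, y) (1, 0)) s := by
  have h1 : HasFDerivAt (Function.uncurry F) (fderiv ℝ (Function.uncurry F) (s, y)) (s, y) :=
    (hF.differentiable one_ne_zero (s, y)).hasFDerivAt
  have h2 : HasDerivAt (fun s' : ℝ => ((s' : ℝ), y)) ((1 : ℝ), (0 : ℝ)) s :=
    (hasDerivAt_id s).prodMk (hasDerivAt_const s y)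
  exact h1.comp_hasDerivAt s h2

lemma cont_fderiv_apply {F : ℝ → ℝ → ℝ} (hF : ContDiff ℝ 1 (Function.uncurry F)) :
    Continuous (fun q : ℝ × ℝ => fderiv ℝ (Function.uncurry F) q (1, 0)) := by
  have h := hF.continuous_fderiv one_ne_zero
  exact (ContinuousLinearMap.apply ℝ ℝ ((1 : ℝ), (0 : ℝ))).continuous.comp h

lemma cont_partial {F : ℝ → ℝ → ℝ} (hF : ContDiff ℝ 1 (Function.uncurry F)) (t : ℝ) :
    Continuous (fun y => deriv (fun s => F s y) t) := by
  have h : (fun y => deriv (fun s => F s y) t)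
      = fun y => fderiv ℝ (Function.uncurry F) (t, y) (1, 0) :=
    funext fun y => (partial_hasDerivAt hF t y).deriv
  rw [h]
  exact (cont_fderiv_apply hF).comp (continuous_const.prodMk continuous_id)

open MeasureTheory in
lemma param_hasDerivAt {F : ℝ → ℝ → ℝ} (hF : ContDiff ℝ 1 (Function.uncurry F))
    (a b t : ℝ) :
    HasDerivAt (fun s => ∫ y in a..b, F s y)
      (∫ y in a..b, deriv (fun s => F s y) t) t := by
  set g : ℝ × ℝ → ℝ := fun q => fderiv ℝ (Function.uncurry F) q (1, 0) with hg
  have hgc : Continuous g := cont_fderiv_apply hF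
  have hFc : Continuous (Function.uncurry F) := hF.continuous
  have hFyc : ∀ s, Continuous (fun y => F s y) := fun s =>
    hFc.comp (continuous_const.prodMk continuous_id)
  obtain ⟨M, hM⟩ := ((isCompact_closedBall t 1).prod isCompact_uIcc).exists_bound_of_continuousOn
    (s := Metric.closedBall t 1 ×ˢ Set.uIcc a b) hgc.continuousOn
  have key := intervalIntegral.hasDerivAt_integral_of_dominated_loc_of_deriv_le
    (F := F) (F' := fun s y => g (s, y)) (x₀ := t) (s := Metric.ball t 1) (a := a) (b := b)
    (μ := volume) (bound := fun _ => M) (Metric.ball_mem_nhds t one_pos)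
    (Filter.Eventually.of_forall fun s => (hFyc s).aestronglyMeasurable)
    ((hFyc t).intervalIntegrable a b)
    ((hgc.comp (continuous_const.prodMk continuous_id)).aestronglyMeasurable)
    (Filter.Eventually.of_forall fun y hy s hs => hM (s, y)
      ⟨Metric.ball_subset_closedBall hs, Set.uIoc_subset_uIcc hy⟩)
    (intervalIntegrable_const)
    (Filter.Eventually.of_forall fun y _ s _ => partial_hasDerivAt hF s y)
  have h2 := key.2
  have h3 : (fun y => g (t, y)) = fun y => deriv (fun s => F s y) t :=
    funext fun y => ((partial_hasDerivAt hF t y).deriv).symm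
  rwa [h3] at h2

/-- energy stability for the semi-discrete energy-dissipative DG
scheme based on the `(v,w)` formulation, with periodic boundary conditions:
the discrete energy `t ↦ Σ_j ∫_{Ω_j} (v² + w²)/2 dx` has derivative
`−(1/2) Σ_j s_{j+1/2}(⟦v⟧² + ⟦w⟧²) − Σ_j ε_j ∫_{Ω_j} (v_x² + w_x²) dx ≤ 0`. -/

theorem dg_vw_dissipative_energy
    (N p : ℕ) [NeZero N] (T α β : ℝ) (hT : 0 < T) (hα : 0 < α) (hβ : 0 < β)
    (x : Fin (N + 1) → ℝ) (hx : StrictMono x)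
    (v w ψ : Fin N → ℝ → ℝ → ℝ)
    (ε : Fin N → ℝ → ℝ) (hε : ∀ j, ∀ t ∈ Set.Icc (0 : ℝ) T, 0 ≤ ε j t)
    (hvreg : ∀ j, ContDiff ℝ 1 (Function.uncurry (v j)))
    (hwreg : ∀ j, ContDiff ℝ 1 (Function.uncurry (w j)))
    (hψreg : ∀ j, ContDiff ℝ 1 (Function.uncurry (ψ j)))
    (hvpoly : ∀ j t, IsPolyDeg p (v j t))
    (hwpoly : ∀ j t, IsPolyDeg p (w j t))
    (hψpoly : ∀ j t, IsPolyDeg p (ψ j t))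
    -- scheme equation (i) (the `v`-equation with diffusive flux and
    -- shock-capturing term), for all test functions `φ ∈ X^p_Δx`
    (hscheme1 : ∀ φ : Fin N → Polynomial ℝ, (∀ j, (φ j).natDegree ≤ p) →
      ∀ t ∈ Set.Icc (0 : ℝ) T,
        (∑ j : Fin N, ∫ y in cellL x j..cellR x j,
            deriv (fun s => v j s y) t * (φ j).eval y)
        + (∑ j : Fin N, ∫ y in cellL x j..cellR x j,
            waveC α β (ψ j t y) * w j t y * deriv (fun z => (φ j).eval z) y)
        - (∑ j : Fin N,
            (cbarI α β x ψ t j * avgI x w t j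
              + (1 / 2) * sMaxI α β x ψ t j * jmpI x v t j)
            * (φ j).eval (cellR x j))
        + (∑ j : Fin N,
            (cbarI α β x ψ t (j - 1) * avgI x w t (j - 1)
              + (1 / 2) * sMaxI α β x ψ t (j - 1) * jmpI x v t (j - 1))
            * (φ j).eval (cellL x j))
        =
        (∑ j : Fin N, ∫ y in cellL x j..cellR x j,
            waveC α β (ψ j t y) * deriv (fun z => w j t z * (φ j).eval z) y)
        - (∑ j : Fin N, cbarI α β x ψ t j * trM x w t j * (φ j).eval (cellR x j))
        + (∑ j : Fin N,
            cbarI α β x ψ t (j - 1) * trP x w t (j - 1) * (φ j).eval (cellL x j))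
        - (∑ j : Fin N, ε j t * ∫ y in cellL x j..cellR x j,
            deriv (fun z => v j t z) y * deriv (fun z => (φ j).eval z) y))
    -- scheme equation (ii) (the `w`-equation with diffusive flux and
    -- shock-capturing term), for all test functions `η ∈ X^p_Δx`
    (hscheme2 : ∀ η : Fin N → Polynomial ℝ, (∀ j, (η j).natDegree ≤ p) →
      ∀ t ∈ Set.Icc (0 : ℝ) T,
        (∑ j : Fin N, ∫ y in cellL x j..cellR x j,
            deriv (fun s => w j s y) t * (η j).eval y)
        + (∑ j : Fin N, ∫ y in cellL x j..cellR x j,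
            waveC α β (ψ j t y) * v j t y * deriv (fun z => (η j).eval z) y)
        - (∑ j : Fin N,
            (cbarI α β x ψ t j * avgI x v t j
              + (1 / 2) * sMaxI α β x ψ t j * jmpI x w t j)
            * (η j).eval (cellR x j))
        + (∑ j : Fin N,
            (cbarI α β x ψ t (j - 1) * avgI x v t (j - 1)
              + (1 / 2) * sMaxI α β x ψ t (j - 1) * jmpI x w t (j - 1))
            * (η j).eval (cellL x j))
        =
        -(∑ j : Fin N, ε j t * ∫ y in cellL x j..cellR x j,
            deriv (fun z => w j t z) y * deriv (fun z => (η j).eval z) y))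
    -- scheme equation (iii) (the `ψ`-equation), for all test functions `ζ ∈ X^p_Δx`
    (hscheme3 : ∀ ζ : Fin N → Polynomial ℝ, (∀ j, (ζ j).natDegree ≤ p) →
      ∀ t ∈ Set.Icc (0 : ℝ) T,
        (∑ j : Fin N, ∫ y in cellL x j..cellR x j,
            deriv (fun s => ψ j s y) t * (ζ j).eval y)
        = ∑ j : Fin N, ∫ y in cellL x j..cellR x j, v j t y * (ζ j).eval y) :
    ∀ t ∈ Set.Icc (0 : ℝ) T,
      HasDerivAt
        (fun s => ∑ j : Fin N, ∫ y in cellL x j..cellR x j,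
          (v j s y ^ 2 + w j s y ^ 2) / 2)
        (-(1 / 2) * (∑ j : Fin N,
            sMaxI α β x ψ t j * (jmpI x v t j ^ 2 + jmpI x w t j ^ 2))
          - ∑ j : Fin N, ε j t * ∫ y in cellL x j..cellR x j,
              ((deriv (fun z => v j t z) y) ^ 2 + (deriv (fun z => w j t z) y) ^ 2))
        t
      ∧ -(1 / 2) * (∑ j : Fin N,
            sMaxI α β x ψ t j * (jmpI x v t j ^ 2 + jmpI x w t j ^ 2))
          - (∑ j : Fin N, ε j t * ∫ y in cellL x j..cellR x j,
              ((deriv (fun z => v j t z) y) ^ 2 + (deriv (fun z => w j t z) y) ^ 2))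
        ≤ 0 := by
  intro t ht
  -- polynomial representations at time t
  choose qv hqvd hqv using fun j => hvpoly j t
  choose qw hqwd hqw using fun j => hwpoly j t
  -- spatial derivatives of v, w at time t
  have hvD : ∀ j y, HasDerivAt (fun z => v j t z) ((qv j).derivative.eval y) y := by
    intro j y
    simpa only [← hqv] using (qv j).hasDerivAt y
  have hwD : ∀ j y, HasDerivAt (fun z => w j t z) ((qw j).derivative.eval y) y := by
    intro j y
    simpa only [← hqw] using (qw j).hasDerivAt y
  have hvd : ∀ j y, deriv (fun z => v j t z) y = (qv j).derivative.eval y :=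
    fun j y => (hvD j y).deriv
  have hwd : ∀ j y, deriv (fun z => w j t z) y = (qw j).derivative.eval y :=
    fun j y => (hwD j y).deriv
  -- continuity facts
  have hvc : ∀ j, Continuous (fun y => v j t y) := by
    intro j
    have h : (fun y => v j t y) = fun y => (qv j).eval y := funext (hqv j)
    rw [h]; exact (qv j).continuous
  have hwc : ∀ j, Continuous (fun y => w j t y) := by
    intro j
    have h : (fun y => w j t y) = fun y => (qw j).eval y := funext (hqw j)
    rw [h]; exact (qw j).continuous
  have hvdc : ∀ j, Continuous (fun y => deriv (fun z => v j t z) y) := by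
    intro j
    have h : (fun y => deriv (fun z => v j t z) y) = fun y => (qv j).derivative.eval y :=
      funext fun y => hvd j y
    rw [h]; exact (qv j).derivative.continuous
  have hwdc : ∀ j, Continuous (fun y => deriv (fun z => w j t z) y) := by
    intro j
    have h : (fun y => deriv (fun z => w j t z) y) = fun y => (qw j).derivative.eval y :=
      funext fun y => hwd j y
    rw [h]; exact (qw j).derivative.continuous
  have hψc : ∀ j, Continuous (fun y => ψ j t y) := fun j =>
    (hψreg j).continuous.comp (continuous_const.prodMk continuous_id)
  have hwaveC : Continuous (waveC α β) := by
    refine Real.continuous_sqrt.comp ?_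
    exact (continuous_const.mul (Real.continuous_cos.pow 2)).add
      (continuous_const.mul (Real.continuous_sin.pow 2))
  have hcψ : ∀ j, Continuous (fun y => waveC α β (ψ j t y)) := fun j => hwaveC.comp (hψc j)
  have hab : ∀ j : Fin N, cellL x j ≤ cellR x j := fun j => (hx (Fin.castSucc_lt_succ (i := j))).le
  -- time derivative of the energy
  have hvregt : ∀ j y, HasDerivAt (fun s => v j s y) (deriv (fun s => v j s y) t) t :=
    fun j y => (partial_hasDerivAt (hvreg j) t y).differentiableAt.hasDerivAt
  have hwregt : ∀ j y, HasDerivAt (fun s => w j s y) (deriv (fun s => w j s y) t) t :=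
    fun j y => (partial_hasDerivAt (hwreg j) t y).differentiableAt.hasDerivAt
  have hEj : ∀ j : Fin N, HasDerivAt
      (fun s => ∫ y in cellL x j..cellR x j, (v j s y ^ 2 + w j s y ^ 2) / 2)
      (∫ y in cellL x j..cellR x j,
        (deriv (fun s => v j s y) t * v j t y + deriv (fun s => w j s y) t * w j t y)) t := by
    intro j
    have hFj : ContDiff ℝ 1 (Function.uncurry (fun s y => (v j s y ^ 2 + w j s y ^ 2) / 2)) :=
      (((hvreg j).pow 2).add ((hwreg j).pow 2)).div_const 2
    have h := param_hasDerivAt (F := fun s y => (v j s y ^ 2 + w j s y ^ 2) / 2) hFj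
      (cellL x j) (cellR x j) t
    convert h using 1
    apply intervalIntegral.integral_congr
    intro y _
    have hds : HasDerivAt (fun s => (v j s y ^ 2 + w j s y ^ 2) / 2)
        (deriv (fun s => v j s y) t * v j t y + deriv (fun s => w j s y) t * w j t y) t := by
      have h2 := (((hvregt j y).fun_pow 2).fun_add ((hwregt j y).fun_pow 2)).div_const 2
      refine h2.congr_deriv ?_
      push_cast
      ring
    exact hds.deriv.symm
  have hEderiv : HasDerivAt
      (fun s => ∑ j : Fin N, ∫ y in cellL x j..cellR x j, (v j s y ^ 2 + w j s y ^ 2) / 2)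
      (∑ j : Fin N, ∫ y in cellL x j..cellR x j,
        (deriv (fun s => v j s y) t * v j t y + deriv (fun s => w j s y) t * w j t y)) t :=
    HasDerivAt.fun_sum fun j _ => hEj j
  -- split the derivative integrand
  have hsplit : (∑ j : Fin N, ∫ y in cellL x j..cellR x j,
        (deriv (fun s => v j s y) t * v j t y + deriv (fun s => w j s y) t * w j t y))
      = (∑ j : Fin N, ∫ y in cellL x j..cellR x j, deriv (fun s => v j s y) t * v j t y)
        + (∑ j : Fin N, ∫ y in cellL x j..cellR x j, deriv (fun s => w j s y) t * w j t y) := by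
    rw [← Finset.sum_add_distrib]
    refine Finset.sum_congr rfl fun j _ => ?_
    exact intervalIntegral.integral_add
      (((cont_partial (hvreg j) t).mul (hvc j)).intervalIntegrable _ _)
      (((cont_partial (hwreg j) t).mul (hwc j)).intervalIntegrable _ _)
  -- instantiate the scheme with φ = v(t), η = w(t)
  have hE1 := hscheme1 qv hqvd t ht
  have hE2 := hscheme2 qw hqwd t ht
  simp only [← hqv] at hE1
  simp only [← hqw] at hE2
  have htrMv : ∀ j : Fin N, v j t (cellR x j) = trM x v t j := fun j => rfl
  have htrMw : ∀ j : Fin N, w j t (cellR x j) = trM x w t j := fun j => rfl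
  have htrPv : ∀ j : Fin N, v j t (cellL x j) = trP x v t (j - 1) := by
    intro j; simp [trP, sub_add_cancel]
  have htrPw : ∀ j : Fin N, w j t (cellL x j) = trP x w t (j - 1) := by
    intro j; simp [trP, sub_add_cancel]
  simp only [htrMv, htrMw, htrPv, htrPw] at hE1 hE2
  -- reindex the shifted interface sums
  have hshift : ∀ f : Fin N → ℝ, (∑ j : Fin N, f (j - 1)) = ∑ j : Fin N, f j := fun f =>
    Fintype.sum_equiv (Equiv.subRight 1) _ _ fun j => rfl
  have hT4v : (∑ j : Fin N,
        (cbarI α β x ψ t (j - 1) * avgI x w t (j - 1)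
          + 1 / 2 * sMaxI α β x ψ t (j - 1) * jmpI x v t (j - 1)) * trP x v t (j - 1))
      = ∑ j : Fin N,
        (cbarI α β x ψ t j * avgI x w t j
          + 1 / 2 * sMaxI α β x ψ t j * jmpI x v t j) * trP x v t j :=
    hshift (fun i => (cbarI α β x ψ t i * avgI x w t i
      + 1 / 2 * sMaxI α β x ψ t i * jmpI x v t i) * trP x v t i)
  have hT4w : (∑ j : Fin N,
        (cbarI α β x ψ t (j - 1) * avgI x v t (j - 1)
          + 1 / 2 * sMaxI α β x ψ t (j - 1) * jmpI x w t (j - 1)) * trP x w t (j - 1))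
      = ∑ j : Fin N,
        (cbarI α β x ψ t j * avgI x v t j
          + 1 / 2 * sMaxI α β x ψ t j * jmpI x w t j) * trP x w t j :=
    hshift (fun i => (cbarI α β x ψ t i * avgI x v t i
      + 1 / 2 * sMaxI α β x ψ t i * jmpI x w t i) * trP x w t i)
  have hB3 : (∑ j : Fin N, cbarI α β x ψ t (j - 1) * trP x w t (j - 1) * trP x v t (j - 1))
      = ∑ j : Fin N, cbarI α β x ψ t j * trP x w t j * trP x v t j :=
    hshift (fun i => cbarI α β x ψ t i * trP x w t i * trP x v t i)
  rw [hT4v, hB3] at hE1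
  rw [hT4w] at hE2
  -- split the c(ψ) ∂ₓ(w v) term
  have hB1sum : (∑ j : Fin N, ∫ y in cellL x j..cellR x j,
        waveC α β (ψ j t y) * deriv (fun z => w j t z * v j t z) y)
      = (∑ j : Fin N, ∫ y in cellL x j..cellR x j,
          waveC α β (ψ j t y) * w j t y * deriv (fun z => v j t z) y)
        + (∑ j : Fin N, ∫ y in cellL x j..cellR x j,
          waveC α β (ψ j t y) * v j t y * deriv (fun z => w j t z) y) := by
    rw [← Finset.sum_add_distrib]
    refine Finset.sum_congr rfl fun j _ => ?_
    rw [← intervalIntegral.integral_add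
      ((((hcψ j).fun_mul (hwc j)).fun_mul (hvdc j)).intervalIntegrable _ _)
      ((((hcψ j).fun_mul (hvc j)).fun_mul (hwdc j)).intervalIntegrable _ _)]
    apply intervalIntegral.integral_congr
    intro y _
    have hm : deriv (fun z => w j t z * v j t z) y
        = (qw j).derivative.eval y * v j t y + w j t y * (qv j).derivative.eval y :=
      ((hwD j y).mul (hvD j y)).deriv
    beta_reduce
    rw [hm, hvd j y, hwd j y]
    ring
  rw [hB1sum] at hE1
  -- split the diffusion sums
  have hDsum : (∑ j : Fin N, ε j t * ∫ y in cellL x j..cellR x j,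
        ((deriv (fun z => v j t z) y) ^ 2 + (deriv (fun z => w j t z) y) ^ 2))
      = (∑ j : Fin N, ε j t * ∫ y in cellL x j..cellR x j,
          deriv (fun z => v j t z) y * deriv (fun z => v j t z) y)
        + (∑ j : Fin N, ε j t * ∫ y in cellL x j..cellR x j,
          deriv (fun z => w j t z) y * deriv (fun z => w j t z) y) := by
    rw [← Finset.sum_add_distrib]
    refine Finset.sum_congr rfl fun j _ => ?_
    rw [← mul_add, ← intervalIntegral.integral_add
      (((hvdc j).fun_mul (hvdc j)).intervalIntegrable _ _)
      (((hwdc j).fun_mul (hwdc j)).intervalIntegrable _ _)]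
    congr 1
    apply intervalIntegral.integral_congr
    intro y _
    ring
  -- the interface identity
  have hIsum : (∑ j : Fin N,
        (cbarI α β x ψ t j * avgI x w t j
          + 1 / 2 * sMaxI α β x ψ t j * jmpI x v t j) * trM x v t j)
      - (∑ j : Fin N,
        (cbarI α β x ψ t j * avgI x w t j
          + 1 / 2 * sMaxI α β x ψ t j * jmpI x v t j) * trP x v t j)
      + (∑ j : Fin N,
        (cbarI α β x ψ t j * avgI x v t j
          + 1 / 2 * sMaxI α β x ψ t j * jmpI x w t j) * trM x w t j)
      - (∑ j : Fin N,
        (cbarI α β x ψ t j * avgI x v t j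
          + 1 / 2 * sMaxI α β x ψ t j * jmpI x w t j) * trP x w t j)
      - (∑ j : Fin N, cbarI α β x ψ t j * trM x w t j * trM x v t j)
      + (∑ j : Fin N, cbarI α β x ψ t j * trP x w t j * trP x v t j)
      = -(1 / 2) * (∑ j : Fin N,
          sMaxI α β x ψ t j * (jmpI x v t j ^ 2 + jmpI x w t j ^ 2)) := by
    rw [Finset.mul_sum, ← Finset.sum_sub_distrib, ← Finset.sum_add_distrib,
      ← Finset.sum_sub_distrib, ← Finset.sum_sub_distrib, ← Finset.sum_add_distrib]
    refine Finset.sum_congr rfl fun j _ => ?_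
    simp only [avgI, jmpI]
    ring
  -- main identity
  have hmain : (∑ j : Fin N, ∫ y in cellL x j..cellR x j,
        (deriv (fun s => v j s y) t * v j t y + deriv (fun s => w j s y) t * w j t y))
      = -(1 / 2) * (∑ j : Fin N,
            sMaxI α β x ψ t j * (jmpI x v t j ^ 2 + jmpI x w t j ^ 2))
          - ∑ j : Fin N, ε j t * ∫ y in cellL x j..cellR x j,
              ((deriv (fun z => v j t z) y) ^ 2 + (deriv (fun z => w j t z) y) ^ 2) := by
    rw [hsplit, hDsum]
    linarith [hE1, hE2, hIsum]
  refine ⟨by rw [← hmain]; exact hEderiv, ?_⟩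
  have hsum1 : 0 ≤ ∑ j : Fin N, sMaxI α β x ψ t j * (jmpI x v t j ^ 2 + jmpI x w t j ^ 2) :=
    Finset.sum_nonneg fun j _ => mul_nonneg
      (le_max_of_le_left (Real.sqrt_nonneg _)) (by positivity)
  have hsum2 : 0 ≤ ∑ j : Fin N, ε j t * ∫ y in cellL x j..cellR x j,
      ((deriv (fun z => v j t z) y) ^ 2 + (deriv (fun z => w j t z) y) ^ 2) :=
    Finset.sum_nonneg fun j _ => mul_nonneg (hε j t ht)
      (intervalIntegral.integral_nonneg (hab j) fun y _ => by positivity)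
  linarith


end
end
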